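/- Suppose E[R | A, C, Y] = π(C,Y) > 0 a.s., the propensity score e(C) = pr(A=1 | C) satisfies 0 < e(C) < 1 a.s., Y = A·Y(1) + (1−A)·Y(0), and (Y(1),Y(0)) ⊥ A | C. Then E[ (R/π(C,Y)) · (A·Y)/e(C) ] = E[Y(1)] and E[ (R/π(C,Y)) · ((1−A)·Y)/(1−e(C)) ] = E[Y(0)]. -/

import Mathlib

open MeasureTheory ProbabilityTheory

section Helpers

variable {Ω : Type*} [mΩ : MeasurableSpace Ω] [StandardBorelSpace Ω]

omit mΩ [StandardBorelSpace Ω] in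
lemma sup_eq_generateFrom_inter (m₁ m₂ : MeasurableSpace Ω) :
    m₁ ⊔ m₂ = MeasurableSpace.generateFrom
      {S | ∃ u, MeasurableSet[m₁] u ∧ ∃ v, MeasurableSet[m₂] v ∧ S = u ∩ v} := by
  apply le_antisymm
  · refine sup_le ?_ ?_
    · intro s hs
      exact MeasurableSpace.measurableSet_generateFrom ⟨s, hs, Set.univ, MeasurableSet.univ,
        (Set.inter_univ s).symm⟩
    · intro s hs
      exact MeasurableSpace.measurableSet_generateFrom ⟨Set.univ, MeasurableSet.univ, s, hs,
        (Set.univ_inter s).symm⟩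
  · refine MeasurableSpace.generateFrom_le ?_
    rintro S ⟨u, hu, v, hv, rfl⟩
    exact MeasurableSet.inter (le_sup_left (a := m₁) (b := m₂) u hu)
      (le_sup_right (a := m₁) (b := m₂) v hv)

omit mΩ [StandardBorelSpace Ω] in
lemma isPiSystem_inter_sets (m₁ m₂ : MeasurableSpace Ω) :
    IsPiSystem {S | ∃ u, MeasurableSet[m₁] u ∧ ∃ v, MeasurableSet[m₂] v ∧ S = u ∩ v} := by
  rintro S ⟨u, hu, v, hv, rfl⟩ T ⟨u', hu', v', hv', rfl⟩ -
  exact ⟨u ∩ u', hu.inter hu', v ∩ v', hv.inter hv', by ext x; simp; tauto⟩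

lemma condexp_indicator_sup_comap {γ : Type*} [MeasurableSpace γ]
    (μ : Measure Ω) [IsProbabilityMeasure μ]
    (A : Ω → Bool) (C : Ω → γ) (W : Ω → ℝ × ℝ)
    (hmC : MeasurableSpace.comap C inferInstance ≤ mΩ)
    (hA : Measurable A) (hW : Measurable W)
    (hCI : CondIndepFun (MeasurableSpace.comap C inferInstance) hmC W A μ) (b : Bool) :
    μ[((A ⁻¹' {b}).indicator (fun _ => (1:ℝ))) |
        MeasurableSpace.comap C inferInstance ⊔ MeasurableSpace.comap W inferInstance]
      =ᵐ[μ] μ[((A ⁻¹' {b}).indicator (fun _ => (1:ℝ))) | MeasurableSpace.comap C inferInstance] := by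
  have hmW : MeasurableSpace.comap W inferInstance ≤ mΩ := hW.comap_le
  have hm₂ : MeasurableSpace.comap C inferInstance ⊔ MeasurableSpace.comap W inferInstance ≤ mΩ :=
    sup_le hmC hmW
  set I : Ω → ℝ := (A ⁻¹' {b}).indicator (fun _ => (1:ℝ)) with hI_def
  have hsb : MeasurableSet (A ⁻¹' {b}) := hA (measurableSet_singleton b)
  have hIint : Integrable I μ := (integrable_const (1:ℝ)).indicator hsb
  set ε : Ω → ℝ := μ[I | MeasurableSpace.comap C inferInstance] with hε_def
  have hεsm : StronglyMeasurable[MeasurableSpace.comap C inferInstance] ε :=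
    stronglyMeasurable_condExp
  have hεint : Integrable ε μ := integrable_condExp
  have key : ∀ t : Set Ω,
      MeasurableSet[MeasurableSpace.comap C inferInstance ⊔ MeasurableSpace.comap W inferInstance] t →
      ∫ x in t, ε x ∂μ = ∫ x in t, I x ∂μ := by
    intro t ht
    refine MeasurableSpace.induction_on_inter
      (m := MeasurableSpace.comap C inferInstance ⊔ MeasurableSpace.comap W inferInstance)
      (C := fun t _ => ∫ x in t, ε x ∂μ = ∫ x in t, I x ∂μ)
      (sup_eq_generateFrom_inter _ _) (isPiSystem_inter_sets _ _) (by simp) ?_ ?_ ?_ t ht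
    · -- basic: t = u ∩ v
      rintro S ⟨u, hu, v, hv, rfl⟩
      obtain ⟨v', hv', rfl⟩ := hv
      have hvΩ : MeasurableSet (W ⁻¹' v') := hW hv'
      have huΩ : MeasurableSet u := hmC u hu
      have hfact := (condIndepFun_iff_condExp_inter_preimage_eq_mul
          (m' := MeasurableSpace.comap C inferInstance) (hm' := hmC)
          (f := W) (g := A) (μ := μ) hW hA).mp hCI v' {b} hv' (measurableSet_singleton b)
      have hR1 : ∫ x in u ∩ W ⁻¹' v', I x ∂μ
          = ∫ x in u, ((W ⁻¹' v' ∩ A ⁻¹' {b}).indicator (fun _ => (1:ℝ))) x ∂μ := by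
        rw [hI_def, setIntegral_indicator hsb, setIntegral_indicator (hvΩ.inter hsb),
          Set.inter_assoc]
      have hR2 : ∫ x in u, ((W ⁻¹' v' ∩ A ⁻¹' {b}).indicator (fun _ => (1:ℝ))) x ∂μ
          = ∫ x in u, (μ⟦W ⁻¹' v' ∩ A ⁻¹' {b} | MeasurableSpace.comap C inferInstance⟧) x ∂μ :=
        (setIntegral_condExp hmC ((integrable_const (1:ℝ)).indicator (hvΩ.inter hsb)) hu).symm
      have hJint : Integrable ((W ⁻¹' v').indicator (fun _ => (1:ℝ))) μ :=
        (integrable_const (1:ℝ)).indicator hvΩ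
      have hmulind : (fun x => ε x * (W ⁻¹' v').indicator (fun _ => (1:ℝ)) x)
          = (W ⁻¹' v').indicator ε := by
        ext x
        by_cases h1 : W x ∈ v' <;> simp [Set.indicator_apply, h1]
      have hL1 : ∫ x in u ∩ W ⁻¹' v', ε x ∂μ
          = ∫ x in u, (fun x => ε x * (W ⁻¹' v').indicator (fun _ => (1:ℝ)) x) x ∂μ := by
        rw [hmulind, setIntegral_indicator hvΩ]
      have hεJint : Integrable (fun x => ε x * (W ⁻¹' v').indicator (fun _ => (1:ℝ)) x) μ := by
        rw [hmulind]
        exact hεint.indicator hvΩ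
      have hpull : μ[(fun x => ε x * (W ⁻¹' v').indicator (fun _ => (1:ℝ)) x) |
            MeasurableSpace.comap C inferInstance]
          =ᵐ[μ] fun x => ε x * (μ⟦W ⁻¹' v' | MeasurableSpace.comap C inferInstance⟧) x :=
        condExp_mul_of_stronglyMeasurable_left hεsm hεJint hJint
      have hL2 : ∫ x in u, (fun x => ε x * (W ⁻¹' v').indicator (fun _ => (1:ℝ)) x) x ∂μ
          = ∫ x in u, (fun x => ε x * (μ⟦W ⁻¹' v' | MeasurableSpace.comap C inferInstance⟧) x) x ∂μ := by
        rw [← setIntegral_condExp hmC hεJint hu]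
        exact setIntegral_congr_ae huΩ (hpull.mono fun x hx _ => hx)
      rw [hL1, hL2, hR1, hR2]
      refine setIntegral_congr_ae huΩ (hfact.mono fun x hx _ => ?_)
      rw [hx]; ring
    · -- compl
      intro t ht hteq
      have htΩ : MeasurableSet t := hm₂ t ht
      have h1 := integral_add_compl htΩ hεint
      have h2 := integral_add_compl htΩ hIint
      have h3 : ∫ x, ε x ∂μ = ∫ x, I x ∂μ := integral_condExp hmC
      linarith
    · -- iUnion
      intro f hdisj hfm hf
      have hfΩ : ∀ i, MeasurableSet (f i) := fun i => hm₂ _ (hfm i)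
      rw [integral_iUnion hfΩ hdisj hεint.integrableOn,
        integral_iUnion hfΩ hdisj hIint.integrableOn]
      exact tsum_congr hf
  exact (ae_eq_condExp_of_forall_setIntegral_eq hm₂ hIint
    (fun s _ _ => hεint.integrableOn)
    (fun s hs _ => key s hs)
    ((hεsm.mono (le_sup_left (b := MeasurableSpace.comap W inferInstance))).aestronglyMeasurable (μ := μ))).symm

end Helpers

section Helpers2

variable {Ω : Type*} [mΩ : MeasurableSpace Ω] [StandardBorelSpace Ω]

lemma arm_integral {γ : Type*} [MeasurableSpace γ]
    (μ : Measure Ω) [IsProbabilityMeasure μ]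
    (A : Ω → Bool) (C : Ω → γ) (W : Ω → ℝ × ℝ) (Z : Ω → ℝ)
    (hmC : MeasurableSpace.comap C inferInstance ≤ mΩ)
    (hA : Measurable A) (hW : Measurable W)
    (hCI : CondIndepFun (MeasurableSpace.comap C inferInstance) hmC W A μ) (b : Bool)
    (hZ : Measurable[MeasurableSpace.comap W inferInstance] Z)

    (hεpos : ∀ᵐ ω ∂μ, 0 < (μ[((A ⁻¹' {b}).indicator (fun _ => (1:ℝ))) |
        MeasurableSpace.comap C inferInstance]) ω)
    (hg : Integrable (fun ω => (A ⁻¹' {b}).indicator (fun _ => (1:ℝ)) ω * Z ω /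
        (μ[((A ⁻¹' {b}).indicator (fun _ => (1:ℝ))) | MeasurableSpace.comap C inferInstance]) ω) μ) :
    ∫ ω, (A ⁻¹' {b}).indicator (fun _ => (1:ℝ)) ω * Z ω /
        (μ[((A ⁻¹' {b}).indicator (fun _ => (1:ℝ))) | MeasurableSpace.comap C inferInstance]) ω ∂μ
      = ∫ ω, Z ω ∂μ := by
  have hmW : MeasurableSpace.comap W inferInstance ≤ mΩ := hW.comap_le
  have hm₂ : MeasurableSpace.comap C inferInstance ⊔ MeasurableSpace.comap W inferInstance ≤ mΩ :=
    sup_le hmC hmW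
  set I : Ω → ℝ := (A ⁻¹' {b}).indicator (fun _ => (1:ℝ)) with hI_def
  have hsb : MeasurableSet (A ⁻¹' {b}) := hA (measurableSet_singleton b)
  have hIint : Integrable I μ := (integrable_const (1:ℝ)).indicator hsb
  set ε : Ω → ℝ := μ[I | MeasurableSpace.comap C inferInstance] with hε_def
  have hεsm : StronglyMeasurable[MeasurableSpace.comap C inferInstance] ε :=
    stronglyMeasurable_condExp
  have hkey : μ[I | MeasurableSpace.comap C inferInstance ⊔ MeasurableSpace.comap W inferInstance]
      =ᵐ[μ] ε := condexp_indicator_sup_comap μ A C W hmC hA hW hCI b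
  set f2 : Ω → ℝ := fun ω => Z ω / ε ω with hf2_def
  have hf2sm : StronglyMeasurable[MeasurableSpace.comap C inferInstance ⊔
      MeasurableSpace.comap W inferInstance] f2 := by
    refine Measurable.stronglyMeasurable ?_
    exact Measurable.div (hZ.mono le_sup_right le_rfl)
      ((hεsm.measurable).mono le_sup_left le_rfl)
  have hprodint : Integrable (f2 * I) μ :=
    hg.congr (Filter.Eventually.of_forall fun ω => by
      show I ω * Z ω / ε ω = f2 ω * I ω
      simp only [hf2_def]; ring)
  have hpull := condExp_mul_of_stronglyMeasurable_left (μ := μ) hf2sm hprodint hIint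
  have hchain : μ[f2 * I | MeasurableSpace.comap C inferInstance ⊔
      MeasurableSpace.comap W inferInstance] =ᵐ[μ] Z := by
    refine hpull.trans ?_
    refine (Filter.EventuallyEq.mul (Filter.EventuallyEq.rfl (f := f2)) hkey).trans ?_
    filter_upwards [hεpos] with ω hω
    show f2 ω * ε ω = Z ω
    simp only [hf2_def]
    exact div_mul_cancel₀ _ (ne_of_gt hω)
  calc ∫ ω, I ω * Z ω / ε ω ∂μ
      = ∫ ω, (f2 * I) ω ∂μ := integral_congr_ae (Filter.Eventually.of_forall fun ω => by
        show I ω * Z ω / ε ω = f2 ω * I ω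
        simp only [hf2_def]; ring)
    _ = ∫ ω, (μ[f2 * I | MeasurableSpace.comap C inferInstance ⊔
          MeasurableSpace.comap W inferInstance]) ω ∂μ := (integral_condExp hm₂).symm
    _ = ∫ ω, Z ω ∂μ := integral_congr_ae hchain

end Helpers2

section Helpers3

variable {Ω : Type*} [mΩ : MeasurableSpace Ω] [StandardBorelSpace Ω]

lemma arm_full {γ : Type*} [MeasurableSpace γ]
    (μ : Measure Ω) [IsProbabilityMeasure μ]
    (A : Ω → Bool) (C : Ω → γ) (Y Ypot R : Ω → ℝ) (W : Ω → ℝ × ℝ) (Z : Ω → ℝ)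
    (π : γ → ℝ → ℝ) (w : Ω → ℝ) (b : Bool)
    (hmC : MeasurableSpace.comap C inferInstance ≤ mΩ)
    (hmT : MeasurableSpace.comap (fun ω => (A ω, C ω, Y ω)) inferInstance ≤ mΩ)
    (hA : Measurable A) (hW : Measurable W)
    (hCI : CondIndepFun (MeasurableSpace.comap C inferInstance) hmC W A μ)
    (hRint : Integrable R μ)
    (hp : μ[R | MeasurableSpace.comap (fun ω => (A ω, C ω, Y ω)) inferInstance]
        =ᵐ[μ] fun ω => π (C ω) (Y ω))
    (hppos : ∀ᵐ ω ∂μ, 0 < π (C ω) (Y ω))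
    (hYb : ∀ ω, A ω = b → Y ω = Ypot ω)
    (hZ : Measurable[MeasurableSpace.comap W inferInstance] Z)
    (hYpZ : Ypot =ᵐ[μ] Z)
    (hYpint : Integrable Ypot μ)
    (hεb : μ[((A ⁻¹' {b}).indicator (fun _ => (1:ℝ))) | MeasurableSpace.comap C inferInstance]
        =ᵐ[μ] w)
    (hwpos : ∀ᵐ ω ∂μ, 0 < w ω)
    (hint : Integrable (fun ω => R ω / π (C ω) (Y ω) *
        ((A ⁻¹' {b}).indicator (fun _ => (1:ℝ)) ω * Y ω / w ω)) μ) :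
    ∫ ω, R ω / π (C ω) (Y ω) * ((A ⁻¹' {b}).indicator (fun _ => (1:ℝ)) ω * Y ω / w ω) ∂μ
      = ∫ ω, Ypot ω ∂μ := by
  set I : Ω → ℝ := (A ⁻¹' {b}).indicator (fun _ => (1:ℝ)) with hI_def
  set p : Ω → ℝ := μ[R | MeasurableSpace.comap (fun ω => (A ω, C ω, Y ω)) inferInstance]
    with hp_def
  set εb : Ω → ℝ := μ[I | MeasurableSpace.comap C inferInstance] with hεb_def
  have hppos' : ∀ᵐ ω ∂μ, 0 < p ω := by
    filter_upwards [hp, hppos] with ω h1 h2; rw [h1]; exact h2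
  have hεbpos : ∀ᵐ ω ∂μ, 0 < εb ω := by
    filter_upwards [hεb, hwpos] with ω h1 h2; rw [h1]; exact h2
  set g1 : Ω → ℝ := fun ω => I ω * Y ω / εb ω with hg1_def
  have h_ae : (fun ω => R ω / π (C ω) (Y ω) * (I ω * Y ω / w ω))
      =ᵐ[μ] fun ω => g1 ω / p ω * R ω := by
    filter_upwards [hp, hεb] with ω h1 h2
    simp only [hg1_def, ← h1, ← h2]
    ring
  have hint' : Integrable (fun ω => g1 ω / p ω * R ω) μ := hint.congr h_ae
  -- strong measurability of g1/p wrt comap (A,C,Y)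
  have hAT : Measurable[MeasurableSpace.comap (fun ω => (A ω, C ω, Y ω)) inferInstance] A :=
    fun s hs => ⟨Prod.fst ⁻¹' s, measurable_fst hs, rfl⟩
  have hYT : Measurable[MeasurableSpace.comap (fun ω => (A ω, C ω, Y ω)) inferInstance] Y :=
    fun s hs => ⟨(fun x : Bool × γ × ℝ => x.2.2) ⁻¹' s, (measurable_snd.snd) hs, rfl⟩
  have hmCT : MeasurableSpace.comap C inferInstance ≤
      MeasurableSpace.comap (fun ω => (A ω, C ω, Y ω)) inferInstance := by
    rintro s ⟨s', hs', rfl⟩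
    exact ⟨(fun x : Bool × γ × ℝ => x.2.1) ⁻¹' s', (measurable_snd.fst) hs', rfl⟩
  have hsm : StronglyMeasurable[MeasurableSpace.comap (fun ω => (A ω, C ω, Y ω)) inferInstance]
      (fun ω => g1 ω / p ω) := by
    refine Measurable.stronglyMeasurable ?_
    refine Measurable.div (Measurable.div (Measurable.mul ?_ hYT) ?_) ?_
    · exact (measurable_const (a := (1:ℝ))).indicator (hAT (measurableSet_singleton b))
    · exact (stronglyMeasurable_condExp.measurable).mono hmCT le_rfl
    · exact stronglyMeasurable_condExp.measurable
  have hpull : μ[(fun ω => g1 ω / p ω) * R |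
      MeasurableSpace.comap (fun ω => (A ω, C ω, Y ω)) inferInstance]
      =ᵐ[μ] (fun ω => g1 ω / p ω) * p :=
    condExp_mul_of_stronglyMeasurable_left hsm hint' hRint
  have hcancel : (fun ω => g1 ω / p ω) * p =ᵐ[μ] g1 := by
    filter_upwards [hppos'] with ω hω
    show g1 ω / p ω * p ω = g1 ω
    exact div_mul_cancel₀ _ (ne_of_gt hω)
  have hg1int : Integrable g1 μ := integrable_condExp.congr (hpull.trans hcancel)
  have hstep1 : ∫ ω, R ω / π (C ω) (Y ω) * (I ω * Y ω / w ω) ∂μ = ∫ ω, g1 ω ∂μ := by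
    calc ∫ ω, R ω / π (C ω) (Y ω) * (I ω * Y ω / w ω) ∂μ
        = ∫ ω, ((fun ω => g1 ω / p ω) * R) ω ∂μ := integral_congr_ae h_ae
      _ = ∫ ω, (μ[(fun ω => g1 ω / p ω) * R |
            MeasurableSpace.comap (fun ω => (A ω, C ω, Y ω)) inferInstance]) ω ∂μ :=
          (integral_condExp hmT).symm
      _ = ∫ ω, g1 ω ∂μ := integral_congr_ae (hpull.trans hcancel)
  -- replace Y by Z inside g1
  have hg1Z : g1 =ᵐ[μ] fun ω => I ω * Z ω / εb ω := by
    filter_upwards [hYpZ] with ω hω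
    simp only [hg1_def]
    by_cases h : A ω = b
    · rw [hYb ω h, hω]
    · simp [hI_def, Set.indicator_apply, Set.mem_preimage, Set.mem_singleton_iff, h]
  have hstep2 : ∫ ω, g1 ω ∂μ = ∫ ω, Z ω ∂μ := by
    rw [integral_congr_ae hg1Z]
    exact arm_integral μ A C W Z hmC hA hW hCI b hZ
      hεbpos (hg1int.congr hg1Z)
  rw [hstep1, hstep2, integral_congr_ae hYpZ.symm]

end Helpers3

open MeasureTheory ProbabilityTheory


/-- Under treatment-independent missingness `E[R|A,C,Y] = π(C,Y) > 0`,
overlap `0 < e(C) < 1` for the propensity score `e(C) = pr(A=1|C)`, consistency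
`Y = A·Y(1) + (1−A)·Y(0)`, and unconfoundedness `(Y(1),Y(0)) ⊥ A | C`, the
IPW population identities hold:
`E[(R/π(C,Y))·A·Y/e(C)] = E[Y(1)]` and `E[(R/π(C,Y))·(1−A)·Y/(1−e(C))] = E[Y(0)]`. -/
theorem wee_ipw_population_identity
    {Ω γ : Type*} [MeasurableSpace Ω] [StandardBorelSpace Ω] [MeasurableSpace γ]
    (μ : Measure Ω) [IsProbabilityMeasure μ]
    (A : Ω → Bool) (C : Ω → γ) (Y Y1 Y0 R : Ω → ℝ)
    (π : γ → ℝ → ℝ) (e : γ → ℝ)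
    (hmC : MeasurableSpace.comap C inferInstance ≤ (inferInstance : MeasurableSpace Ω))
    (hπpos : ∀ᵐ ω ∂μ, 0 < π (C ω) (Y ω))
    (hR : μ[R | MeasurableSpace.comap (fun ω => (A ω, C ω, Y ω)) inferInstance]
        =ᵐ[μ] fun ω => π (C ω) (Y ω))
    (he : μ[(fun ω => if A ω then (1:ℝ) else 0) | MeasurableSpace.comap C inferInstance]
        =ᵐ[μ] fun ω => e (C ω))
    (hoverlap : ∀ᵐ ω ∂μ, 0 < e (C ω) ∧ e (C ω) < 1)
    (hcons : ∀ ω, Y ω = if A ω then Y1 ω else Y0 ω)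
    (hunconf : CondIndepFun (MeasurableSpace.comap C inferInstance) hmC
        (fun ω => (Y1 ω, Y0 ω)) A μ)
    (hint1 : Integrable Y1 μ) (hint0 : Integrable Y0 μ)
    (hintw1 : Integrable (fun ω =>
      (R ω / π (C ω) (Y ω)) * ((if A ω then (1:ℝ) else 0) * Y ω / e (C ω))) μ)
    (hintw0 : Integrable (fun ω =>
      (R ω / π (C ω) (Y ω)) * ((if A ω then (0:ℝ) else 1) * Y ω / (1 - e (C ω)))) μ) :
    (∫ ω, (R ω / π (C ω) (Y ω)) * ((if A ω then (1:ℝ) else 0) * Y ω / e (C ω)) ∂μ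
        = ∫ ω, Y1 ω ∂μ)
    ∧ (∫ ω, (R ω / π (C ω) (Y ω)) * ((if A ω then (0:ℝ) else 1) * Y ω / (1 - e (C ω))) ∂μ
        = ∫ ω, Y0 ω ∂μ) := by
  classical
  haveI : (ae μ).NeBot := ae_neBot.mpr (IsProbabilityMeasure.ne_zero μ)
  -- Step 0: the comap σ-algebra of (A,C,Y) is ≤ the ambient one, and R is integrable
  have hmT : MeasurableSpace.comap (fun ω => (A ω, C ω, Y ω)) inferInstance
      ≤ (inferInstance : MeasurableSpace Ω) := by
    by_contra h
    rw [condExp_of_not_le h] at hR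
    obtain ⟨ω, h1, h2⟩ := (hπpos.and hR.symm).exists
    simp only [Pi.zero_apply] at h2
    exact lt_irrefl _ (h2 ▸ h1)
  have hRint : Integrable R μ := by
    by_contra h
    rw [condExp_of_not_integrable h] at hR
    obtain ⟨ω, h1, h2⟩ := (hπpos.and hR.symm).exists
    simp only [Pi.zero_apply] at h2
    exact lt_irrefl _ (h2 ▸ h1)
  have hT : Measurable (fun ω => (A ω, C ω, Y ω)) := measurable_iff_comap_le.mpr hmT
  have hA : Measurable A := hT.fst
  have hY : Measurable Y := hT.snd.snd
  -- measurable versions of Y1, Y0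
  obtain ⟨Y1', hY1'sm, hY1'e⟩ : ∃ f, StronglyMeasurable f ∧ Y1 =ᵐ[μ] f :=
    ⟨hint1.1.mk Y1, hint1.1.stronglyMeasurable_mk, hint1.1.ae_eq_mk⟩
  obtain ⟨Y0', hY0'sm, hY0'e⟩ : ∃ f, StronglyMeasurable f ∧ Y0 =ᵐ[μ] f :=
    ⟨hint0.1.mk Y0, hint0.1.stronglyMeasurable_mk, hint0.1.ae_eq_mk⟩
  set W : Ω → ℝ × ℝ := fun ω => (Y1' ω, Y0' ω) with hW_def
  have hW : Measurable W := hY1'sm.measurable.prodMk hY0'sm.measurable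
  -- transfer the conditional independence to the measurable versions
  have hCI : CondIndepFun (MeasurableSpace.comap C inferInstance) hmC W A μ := by
    set N : Set Ω := toMeasurable μ ({ω | Y1 ω ≠ Y1' ω} ∪ {ω | Y0 ω ≠ Y0' ω}) with hN_def
    have hNm : MeasurableSet N := measurableSet_toMeasurable _ _
    have hNnull : μ N = 0 := by
      rw [hN_def, measure_toMeasurable]
      exact measure_union_null (ae_iff.mp hY1'e) (ae_iff.mp hY0'e)
    have hnotin : ∀ᵐ ω ∂μ, ω ∉ N := by
      rw [ae_iff]
      simpa using hNnull
    have hindic0 : (N.indicator (fun _ => (1:ℝ))) =ᵐ[μ] 0 := by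
      filter_upwards [hnotin] with ω h
      simp [Set.indicator_apply, h]
    have hce0 : (μ⟦N | MeasurableSpace.comap C inferInstance⟧) =ᵐ[μ] 0 :=
      (condExp_congr_ae hindic0).trans (by rw [condExp_zero])
    have hker := condExpKernel_ae_eq_condExp (μ := μ) hmC hNm
    have hker0 : ∀ᵐ ω ∂μ, condExpKernel μ (MeasurableSpace.comap C inferInstance) ω N = 0 := by
      filter_upwards [hker.trans hce0] with ω hω
      have hfin : condExpKernel μ (MeasurableSpace.comap C inferInstance) ω N ≠ ⊤ :=
        measure_ne_top _ _
      simpa [measureReal_def, ENNReal.toReal_eq_zero_iff, hfin] using hω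
    -- move to the trimmed measure
    have hSm : MeasurableSet[MeasurableSpace.comap C inferInstance]
        ((fun ω => condExpKernel μ (MeasurableSpace.comap C inferInstance) ω N) ⁻¹' {0}ᶜ) := by
      exact (Kernel.measurable_coe (condExpKernel μ (MeasurableSpace.comap C inferInstance))
        hNm) (measurableSet_singleton 0).compl
    have htrim : ∀ᵐ ω ∂(μ.trim hmC),
        condExpKernel μ (MeasurableSpace.comap C inferInstance) ω N = 0 := by
      rw [ae_iff]
      have heq : {ω | ¬ condExpKernel μ (MeasurableSpace.comap C inferInstance) ω N = 0}
          = (fun ω => condExpKernel μ (MeasurableSpace.comap C inferInstance) ω N) ⁻¹' {0}ᶜ := by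
        ext ω; simp
      rw [heq, trim_measurableSet_eq hmC hSm, ← heq]
      exact ae_iff.mp hker0
    refine Kernel.IndepFun.congr' hunconf ?_ ?_
    · filter_upwards [htrim] with a ha
      rw [Filter.eventuallyEq_iff_exists_mem]
      refine ⟨Nᶜ, ?_, fun x hx => ?_⟩
      · rw [mem_ae_iff]
        simpa using ha
      · have hx' : x ∉ ({ω | Y1 ω ≠ Y1' ω} ∪ {ω | Y0 ω ≠ Y0' ω}) :=
          fun hmem => hx (subset_toMeasurable _ _ hmem)
        simp only [Set.mem_union, Set.mem_setOf_eq, not_or, not_not] at hx'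
        simp [hW_def, hx'.1, hx'.2]
    · exact Filter.Eventually.of_forall fun a => Filter.EventuallyEq.rfl
  -- indicator identities
  have hconv1 : ∀ ω, (A ⁻¹' {true}).indicator (fun _ => (1:ℝ)) ω = if A ω then 1 else 0 :=
    fun ω => by by_cases h : A ω <;> simp [Set.indicator_apply, h]
  have hconv0 : ∀ ω, (A ⁻¹' {false}).indicator (fun _ => (1:ℝ)) ω = if A ω then 0 else 1 :=
    fun ω => by cases h : A ω <;> simp [Set.indicator_apply, h]
  -- conditional expectations of the indicators
  have hεtrue : μ[((A ⁻¹' {true}).indicator (fun _ => (1:ℝ))) |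
      MeasurableSpace.comap C inferInstance] =ᵐ[μ] fun ω => e (C ω) :=
    (condExp_congr_ae (Filter.Eventually.of_forall fun ω => (hconv1 ω))).trans he
  have hεfalse : μ[((A ⁻¹' {false}).indicator (fun _ => (1:ℝ))) |
      MeasurableSpace.comap C inferInstance] =ᵐ[μ] fun ω => 1 - e (C ω) := by
    have hsub : ((A ⁻¹' {false}).indicator (fun _ => (1:ℝ)))
        = (fun _ => (1:ℝ)) - (fun ω => if A ω then (1:ℝ) else 0) := by
      funext ω
      cases h : A ω <;> simp [Set.indicator_apply, h]
    rw [hsub]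
    have hI1int : Integrable (fun ω => if A ω then (1:ℝ) else 0) μ := by
      refine (integrable_const (1:ℝ)).mono ?_ ?_
      · exact (Measurable.ite (hA (measurableSet_singleton true)) measurable_const
          measurable_const).aestronglyMeasurable
      · refine Filter.Eventually.of_forall fun ω => ?_
        by_cases h : A ω <;> simp [h]
    refine (condExp_sub (integrable_const (1:ℝ)) hI1int _).trans ?_
    have hc : μ[(fun _ : Ω => (1:ℝ)) | MeasurableSpace.comap C inferInstance] = fun _ => (1:ℝ) :=
      condExp_const hmC 1
    filter_upwards [he] with ω hω
    simp [hc, hω]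
  -- positivity
  have hpos1 : ∀ᵐ ω ∂μ, 0 < e (C ω) := hoverlap.mono fun ω h => h.1
  have hpos0 : ∀ᵐ ω ∂μ, 0 < 1 - e (C ω) := hoverlap.mono fun ω h => sub_pos.mpr h.2
  -- measurability of Y1', Y0' wrt comap W
  have hZ1 : Measurable[MeasurableSpace.comap W inferInstance] Y1' :=
    fun s hs => ⟨Prod.fst ⁻¹' s, measurable_fst hs, rfl⟩
  have hZ0 : Measurable[MeasurableSpace.comap W inferInstance] Y0' :=
    fun s hs => ⟨Prod.snd ⁻¹' s, measurable_snd hs, rfl⟩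
  constructor
  · have hconv : (fun ω => (R ω / π (C ω) (Y ω)) * ((if A ω then (1:ℝ) else 0) * Y ω / e (C ω)))
        = fun ω => R ω / π (C ω) (Y ω) *
          ((A ⁻¹' {true}).indicator (fun _ => (1:ℝ)) ω * Y ω / (fun ω => e (C ω)) ω) := by
      funext ω; rw [hconv1]
    rw [hconv]
    exact arm_full μ A C Y Y1 R W Y1' π (fun ω => e (C ω)) true hmC hmT hA hW hCI hRint hR hπpos
      (fun ω h => by simp [hcons ω, h]) hZ1 hY1'e hint1 hεtrue hpos1 (by rw [← hconv]; exact hintw1)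
  · have hconv : (fun ω => (R ω / π (C ω) (Y ω)) * ((if A ω then (0:ℝ) else 1) * Y ω / (1 - e (C ω))))
        = fun ω => R ω / π (C ω) (Y ω) *
          ((A ⁻¹' {false}).indicator (fun _ => (1:ℝ)) ω * Y ω / (fun ω => 1 - e (C ω)) ω) := by
      funext ω; rw [hconv0]
    rw [hconv]
    exact arm_full μ A C Y Y0 R W Y0' π (fun ω => 1 - e (C ω)) false hmC hmT hA hW hCI hRint hR
      hπpos (fun ω h => by simp [hcons ω, h]) hZ0 hY0'e hint0 hεfalse hpos0
      (by rw [← hconv]; exact hintw0)
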